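/- (Free distance of DTS-based systematic convolutional codes) Let w ≥ 1 and let T₁, …, T_k be finite sets of integers, each of size w, such that each positive difference set Δ⁺(T_i) has exactly w(w−1)/2 elements and the sets Δ⁺(T₁), …, Δ⁺(T_k) are pairwise disjoint. Let h_i = Σ_{t ∈ T_i} D^t ∈ F₂[D, D⁻¹]. Consider all nonzero codewords, i.e., tuples (c₁, …, c_k, c_{k+1}) ∈ F₂[D, D⁻¹]^{k+1}, not all zero, satisfying Σ_{i=1}^k h_i · c_i + c_{k+1} = 0. Then the minimum over all such nonzero codewords of the total Hamming weight Σ_{j=1}^{k+1} wt(c_j) equals w + 1, where wt(c) is the number of nonzero coefficients of the Laurent polynomial c. -/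

import Mathlib

open LaurentPolynomial

/-- The positive difference set of a finite set of integers:
`Δ⁺(T) = {t' − t : t, t' ∈ T, t' > t}`. -/
def posDiff (T : Finset ℤ) : Finset ℤ :=
  ((T ×ˢ T).filter (fun p => p.1 < p.2)).image (fun p => p.2 - p.1)

/-- The Hamming weight of a Laurent polynomial over `F₂`: the number of its nonzero
coefficients. -/
noncomputable def wt (c : LaurentPolynomial (ZMod 2)) : ℕ := c.coeff.support.card

/- ---------- auxiliary lemmas ---------- -/

lemma addself (x : LaurentPolynomial (ZMod 2)) : x + x = 0 := by
  have h : ((1 : ZMod 2) + 1) • x = x + x := by rw [add_smul, one_smul]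
  rw [← h, show ((1 : ZMod 2) + 1) = 0 from rfl, zero_smul]

lemma supp_sumT (s : Finset ℤ) :
    (∑ t ∈ s, (LaurentPolynomial.T t : LaurentPolynomial (ZMod 2))).coeff.support = s := by
  have hs : ∀ t : ℤ, (LaurentPolynomial.T t : LaurentPolynomial (ZMod 2)).coeff.support = {t} := by
    intro t
    show (Finsupp.single t (1 : ZMod 2)).support = {t}
    exact Finsupp.support_single_ne_zero t one_ne_zero
  rw [AddMonoidAlgebra.coeff_sum, Finsupp.support_sum_eq_biUnion]
  · rw [Finset.biUnion_congr rfl (fun t _ => hs t), Finset.biUnion_singleton_eq_self]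
  · intro i j hij
    rw [hs i, hs j, Finset.disjoint_singleton]
    exact hij

lemma mulT_apply (t n : ℤ) (c : LaurentPolynomial (ZMod 2)) :
    (LaurentPolynomial.T t * c : LaurentPolynomial (ZMod 2)).coeff n = c.coeff (n - t) := by
  show ((AddMonoidAlgebra.single t 1 * c : AddMonoidAlgebra (ZMod 2) ℤ)).coeff n = _
  rw [AddMonoidAlgebra.coeff_single_mul_apply, one_mul, neg_add_eq_sub]

lemma supp_one : (1 : LaurentPolynomial (ZMod 2)).coeff.support = {0} := by
  rw [AddMonoidAlgebra.one_def]
  exact Finsupp.support_single_ne_zero 0 one_ne_zero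

lemma two_mul_card_filter (T : Finset ℤ) :
    2 * ((T ×ˢ T).filter (fun p => p.1 < p.2)).card = T.card * T.card - T.card := by
  have hsplit : T.offDiag =
      ((T ×ˢ T).filter (fun p => p.1 < p.2)) ∪ ((T ×ˢ T).filter (fun p => p.2 < p.1)) := by
    rw [← Finset.filter_or]
    ext p
    simp only [Finset.mem_offDiag, Finset.mem_filter, Finset.mem_product]
    constructor
    · rintro ⟨h1, h2, h3⟩; exact ⟨⟨h1, h2⟩, by omega⟩
    · rintro ⟨⟨h1, h2⟩, h3⟩; exact ⟨h1, h2, by omega⟩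
  have hswap : ((T ×ˢ T).filter (fun p => p.2 < p.1)) =
      ((T ×ˢ T).filter (fun p => p.1 < p.2)).image Prod.swap := by
    ext p
    simp only [Finset.mem_image, Finset.mem_filter, Finset.mem_product]
    constructor
    · rintro ⟨⟨h1, h2⟩, h3⟩; exact ⟨p.swap, ⟨⟨h2, h1⟩, h3⟩, Prod.swap_swap p⟩
    · rintro ⟨q, ⟨⟨h1, h2⟩, h3⟩, rfl⟩; exact ⟨⟨h2, h1⟩, h3⟩
  have hdisj : Disjoint ((T ×ˢ T).filter (fun p => p.1 < p.2))
      ((T ×ˢ T).filter (fun p => p.2 < p.1)) := by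
    rw [Finset.disjoint_left]
    intro p hp hq
    rw [Finset.mem_filter] at hp hq
    omega
  have := Finset.offDiag_card T
  rw [hsplit, Finset.card_union_of_disjoint hdisj, hswap,
    Finset.card_image_of_injective _ Prod.swap_injective] at this
  omega

lemma injOn_diff (T : Finset ℤ) (w : ℕ) (hcard : T.card = w)
    (hfull : (posDiff T).card = w * (w - 1) / 2) :
    Set.InjOn (fun p : ℤ × ℤ => p.2 - p.1) ((T ×ˢ T).filter (fun p => p.1 < p.2)) := by
  rw [← Finset.card_image_iff]
  have h2 := two_mul_card_filter T
  rw [hcard] at h2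
  have hww : w * w - w = w * (w - 1) := (Nat.mul_pred w w).symm
  rw [hww] at h2
  have hfc : ((T ×ˢ T).filter (fun p => p.1 < p.2)).card = w * (w - 1) / 2 := by omega
  rw [hfc, ← hfull]
  rfl

lemma no_collision {k w : ℕ} (T : Fin k → Finset ℤ)
    (hcard : ∀ i, (T i).card = w)
    (hfull : ∀ i, (posDiff (T i)).card = w * (w - 1) / 2)
    (hdisj : ∀ i j : Fin k, i ≠ j → Disjoint (posDiff (T i)) (posDiff (T j)))
    (i j : Fin k) (t t' s s' : ℤ) (ht : t ∈ T j) (ht' : t' ∈ T j)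
    (hs : s ∈ T i) (hs' : s' ∈ T i) (htt : t ≠ t') (hdiff : t - t' = s - s')
    (hne1 : i ≠ j ∨ s ≠ t) (hne2 : i ≠ j ∨ s' ≠ t') : False := by
  by_cases hij : i = j
  · subst hij
    have hst : s ≠ t := hne1.resolve_left (by simp)
    have hst' : s' ≠ t' := hne2.resolve_left (by simp)
    have hinj := injOn_diff (T i) w (hcard i) (hfull i)
    rcases lt_trichotomy s t with hlt | heq | hgt
    · have h2 : s' < t' := by omega
      have m1 : ((s, t) : ℤ × ℤ) ∈ ((T i ×ˢ T i).filter fun p => p.1 < p.2) := by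
        simp only [Finset.mem_filter, Finset.mem_product]; exact ⟨⟨hs, ht⟩, hlt⟩
      have m2 : ((s', t') : ℤ × ℤ) ∈ ((T i ×ˢ T i).filter fun p => p.1 < p.2) := by
        simp only [Finset.mem_filter, Finset.mem_product]; exact ⟨⟨hs', ht'⟩, h2⟩
      have := hinj (Finset.mem_coe.mpr m1) (Finset.mem_coe.mpr m2) (by simp only []; omega)
      rw [Prod.ext_iff] at this
      exact htt this.2
    · exact hst heq
    · have h2 : t' < s' := by omega
      have m1 : ((t, s) : ℤ × ℤ) ∈ ((T i ×ˢ T i).filter fun p => p.1 < p.2) := by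
        simp only [Finset.mem_filter, Finset.mem_product]; exact ⟨⟨ht, hs⟩, hgt⟩
      have m2 : ((t', s') : ℤ × ℤ) ∈ ((T i ×ˢ T i).filter fun p => p.1 < p.2) := by
        simp only [Finset.mem_filter, Finset.mem_product]; exact ⟨⟨ht', hs'⟩, h2⟩
      have := hinj (Finset.mem_coe.mpr m1) (Finset.mem_coe.mpr m2) (by simp only []; omega)
      rw [Prod.ext_iff] at this
      exact htt this.1
  · have main : ∀ (u u' v v' : ℤ), u ∈ T j → u' ∈ T j → v ∈ T i → v' ∈ T i →
        u' < u → u - u' = v - v' → False := by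
      intro u u' v v' hu hu' hv hv' hlt hEq
      have hd1 : u - u' ∈ posDiff (T j) := Finset.mem_image.mpr
        ⟨(u', u), by simp only [Finset.mem_filter, Finset.mem_product]; exact ⟨⟨hu', hu⟩, hlt⟩, rfl⟩
      have hd2 : u - u' ∈ posDiff (T i) := by
        refine Finset.mem_image.mpr ⟨(v', v), ?_, ?_⟩
        · simp only [Finset.mem_filter, Finset.mem_product]
          exact ⟨⟨hv', hv⟩, by omega⟩
        · simp only []
          omega
      exact Finset.disjoint_left.mp (hdisj i j hij) hd2 hd1
    rcases lt_trichotomy t t' with hlt | heq | hgt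
    · exact main t' t s' s ht' ht hs' hs hlt (by omega)
    · exact htt heq
    · exact main t t' s s' ht ht' hs hs' hgt hdiff

/- ---------- the theorem ---------- -/

/-- Free distance of DTS-based systematic convolutional codes: if `T₁, …, T_k` are
size-`w` sets of integers with `|Δ⁺(T_i)| = w(w−1)/2` and the `Δ⁺(T_i)` pairwise
disjoint (a strong DTS), and `h_i = Σ_{t ∈ T_i} D^t`, then the minimum total Hamming
weight of a nonzero codeword `(c₁, …, c_k, c_{k+1})` of the rate-`k/(k+1)` systematic
code with parity-check row `(h₁, …, h_k, 1)` — i.e. satisfying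
`Σ_i h_i · c_i + c_{k+1} = 0` — equals `w + 1`. -/
theorem dts_csoc_free_distance (w k : ℕ) (hw : 1 ≤ w) (hk : 1 ≤ k)
    (T : Fin k → Finset ℤ)
    (hcard : ∀ i, (T i).card = w)
    (hfull : ∀ i, (posDiff (T i)).card = w * (w - 1) / 2)
    (hdisj : ∀ i j : Fin k, i ≠ j → Disjoint (posDiff (T i)) (posDiff (T j)))
    (h : Fin k → LaurentPolynomial (ZMod 2))
    (hh : ∀ i, h i = ∑ t ∈ T i, LaurentPolynomial.T t) :
    IsLeast {d : ℕ | ∃ c : Fin (k + 1) → LaurentPolynomial (ZMod 2), c ≠ 0 ∧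
        (∑ i : Fin k, h i * c i.castSucc) + c (Fin.last k) = 0 ∧
        d = ∑ j, wt (c j)} (w + 1) := by
  classical
  constructor
  · -- membership : there is a codeword of weight w + 1
    set i₀ : Fin k := ⟨0, hk⟩ with hi₀
    refine ⟨fun j => if j = Fin.last k then h i₀ else if j = i₀.castSucc then 1 else 0, ?_, ?_, ?_⟩
    · intro h0
      have h1 := congrFun h0 i₀.castSucc
      rw [if_neg (Fin.castSucc_lt_last i₀).ne, if_pos rfl] at h1
      exact one_ne_zero h1
    · have hcs : ∀ i : Fin k,
          (if i.castSucc = Fin.last k then h i₀ else if i.castSucc = i₀.castSucc then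
            (1 : LaurentPolynomial (ZMod 2)) else 0) = if i = i₀ then 1 else 0 := by
        intro i
        rw [if_neg (Fin.castSucc_lt_last i).ne]
        simp only [Fin.castSucc_inj]
      beta_reduce
      rw [if_pos rfl]
      calc (∑ i : Fin k, h i * if i.castSucc = Fin.last k then h i₀ else
              if i.castSucc = i₀.castSucc then (1 : LaurentPolynomial (ZMod 2)) else 0) + h i₀
          = (∑ i : Fin k, if i = i₀ then h i₀ else 0) + h i₀ := by
            congr 1
            refine Finset.sum_congr rfl fun i _ => ?_
            rw [hcs i]
            by_cases hii : i = i₀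
            · rw [if_pos hii, if_pos hii, mul_one, hii]
            · rw [if_neg hii, if_neg hii, mul_zero]
        _ = h i₀ + h i₀ := by rw [Finset.sum_ite_eq' Finset.univ i₀ (fun _ => h i₀),
              if_pos (Finset.mem_univ i₀)]
        _ = 0 := addself _
    · beta_reduce
      rw [Fin.sum_univ_castSucc]
      have hlast : wt (if Fin.last k = Fin.last k then h i₀ else
          if Fin.last k = i₀.castSucc then (1 : LaurentPolynomial (ZMod 2)) else 0) = w := by
        rw [if_pos rfl]
        unfold wt
        rw [hh i₀, supp_sumT, hcard i₀]
      have hrest : ∀ i : Fin k, wt (if i.castSucc = Fin.last k then h i₀ else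
          if i.castSucc = i₀.castSucc then (1 : LaurentPolynomial (ZMod 2)) else 0) =
          if i = i₀ then 1 else 0 := by
        intro i
        rw [if_neg (Fin.castSucc_lt_last i).ne]
        simp only [Fin.castSucc_inj]
        by_cases hii : i = i₀
        · rw [if_pos hii, if_pos hii]
          unfold wt
          rw [supp_one, Finset.card_singleton]
        · rw [if_neg hii, if_neg hii]
          unfold wt
          simp
      rw [hlast]
      rw [Finset.sum_congr rfl (fun i _ => hrest i),
        Finset.sum_ite_eq' Finset.univ i₀ (fun _ => 1), if_pos (Finset.mem_univ i₀)]
      omega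
  · -- lower bound
    rintro d ⟨c, hc0, heq, rfl⟩
    -- find a nonzero information component
    have hexists : ∃ j : Fin k, c j.castSucc ≠ 0 := by
      by_contra hall
      push_neg at hall
      have hsum0 : (∑ i : Fin k, h i * c i.castSucc) = 0 := by
        refine Finset.sum_eq_zero fun i _ => ?_
        rw [hall i, mul_zero]
      rw [hsum0, zero_add] at heq
      apply hc0
      funext j
      refine Fin.lastCases ?_ ?_ j
      · exact heq
      · exact hall
    obtain ⟨j₀, hj₀⟩ := hexists
    obtain ⟨a, ha⟩ := Finsupp.support_nonempty_iff.mpr (mt AddMonoidAlgebra.coeff_eq_zero.mp hj₀)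
    -- coefficient identity
    have hcoeff : ∀ n : ℤ,
        (∑ i : Fin k, ∑ t ∈ T i, (c i.castSucc : LaurentPolynomial (ZMod 2)).coeff (n - t)) +
          (c (Fin.last k) : LaurentPolynomial (ZMod 2)).coeff n = 0 := by
      intro n
      have h2 : ((∑ i : Fin k, h i * c i.castSucc) + c (Fin.last k) :
          LaurentPolynomial (ZMod 2)).coeff n = (0 : LaurentPolynomial (ZMod 2)).coeff n := by rw [heq]
      rw [AddMonoidAlgebra.coeff_add, Finsupp.add_apply, AddMonoidAlgebra.coeff_zero, Finsupp.zero_apply] at h2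
      rw [← h2]
      congr 1
      rw [AddMonoidAlgebra.coeff_sum, Finset.sum_apply']
      refine Finset.sum_congr rfl fun i _ => ?_
      rw [hh i, Finset.sum_mul, AddMonoidAlgebra.coeff_sum, Finset.sum_apply']
      exact Finset.sum_congr rfl fun t _ => (mulT_apply t n (c i.castSucc)).symm
    -- key dichotomy for each t ∈ T j₀
    have key : ∀ t ∈ T j₀, a + t ∉ (c (Fin.last k)).coeff.support →
        ∃ p : Fin k × ℤ, p.2 ∈ T p.1 ∧ (p.1 ≠ j₀ ∨ p.2 ≠ t) ∧
          (c p.1.castSucc : LaurentPolynomial (ZMod 2)).coeff ((a + t) - p.2) ≠ 0 := by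
      intro t ht hnot
      by_contra hno
      push_neg at hno
      have hlast0 : (c (Fin.last k) : LaurentPolynomial (ZMod 2)).coeff (a + t) = 0 :=
        Finsupp.notMem_support_iff.mp hnot
      have hc := hcoeff (a + t)
      rw [hlast0, add_zero] at hc
      have h1 : ∀ i : Fin k, i ∈ Finset.univ → i ≠ j₀ →
          (∑ s ∈ T i, (c i.castSucc : LaurentPolynomial (ZMod 2)).coeff ((a + t) - s)) = 0 := by
        intro i _ hi
        refine Finset.sum_eq_zero fun s hs => ?_
        exact hno (i, s) hs (Or.inl hi)
      rw [Finset.sum_eq_single_of_mem j₀ (Finset.mem_univ j₀) h1] at hc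
      have h2 : ∀ s ∈ T j₀, s ≠ t →
          (c j₀.castSucc : LaurentPolynomial (ZMod 2)).coeff ((a + t) - s) = 0 := by
        intro s hs hst
        exact hno (j₀, s) hs (Or.inr hst)
      rw [Finset.sum_eq_single_of_mem t ht h2, add_sub_cancel_right] at hc
      exact (Finsupp.mem_support_iff.mp ha) hc
    -- the finset of all nonzero information coefficients
    set A : Finset (Fin k × ℤ) :=
      Finset.univ.biUnion (fun i : Fin k => (c i.castSucc).coeff.support.image (Prod.mk i)) with hA
    have hmemA : ∀ p : Fin k × ℤ, p ∈ A ↔ p.2 ∈ (c p.1.castSucc).coeff.support := by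
      intro p
      rw [hA, Finset.mem_biUnion]
      constructor
      · rintro ⟨i, _, hi⟩
        rw [Finset.mem_image] at hi
        obtain ⟨b, hb, hbp⟩ := hi
        rw [← hbp]
        exact hb
      · intro hp
        exact ⟨p.1, Finset.mem_univ _, Finset.mem_image.mpr ⟨p.2, hp, rfl⟩⟩
    have hcardA : A.card = ∑ i : Fin k, wt (c i.castSucc) := by
      rw [hA, Finset.card_biUnion]
      · refine Finset.sum_congr rfl fun i _ => ?_
        rw [Finset.card_image_of_injective _ (fun b b' hbb => (Prod.mk.injEq _ _ _ _ ▸ hbb).2)]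
        rfl
      · intro i _ j _ hij
        rw [Function.onFun, Finset.disjoint_left]
        intro p hp hq
        rw [Finset.mem_image] at hp hq
        obtain ⟨b, _, rfl⟩ := hp
        obtain ⟨b', _, hb'⟩ := hq
        exact hij ((Prod.mk.injEq _ _ _ _ ▸ hb').1.symm)
    -- the injection
    set B : Finset ((Fin k × ℤ) ⊕ ℤ) :=
      (A.erase (j₀, a)).disjSum (c (Fin.last k)).coeff.support with hB
    set f : ℤ → (Fin k × ℤ) ⊕ ℤ := fun t =>
      if hcond : t ∈ T j₀ ∧ a + t ∉ (c (Fin.last k)).coeff.support then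
        Sum.inl ((key t hcond.1 hcond.2).choose.1,
          (a + t) - (key t hcond.1 hcond.2).choose.2)
      else Sum.inr (a + t) with hf
    have hmaps : ∀ t ∈ T j₀, f t ∈ B := by
      intro t ht
      simp only [hf]
      by_cases hcond : t ∈ T j₀ ∧ a + t ∉ (c (Fin.last k)).coeff.support
      · rw [dif_pos hcond]
        obtain ⟨hpmem, hpne, hpval⟩ := (key t hcond.1 hcond.2).choose_spec
        rw [hB, Finset.inl_mem_disjSum, Finset.mem_erase]
        constructor
        · intro hEq
          rw [Prod.mk.injEq] at hEq
          rcases hpne with hne | hne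
          · exact hne hEq.1
          · apply hne
            have := hEq.2
            omega
        · rw [hmemA]
          exact Finsupp.mem_support_iff.mpr hpval
      · have hin : a + t ∈ (c (Fin.last k)).coeff.support := by
          by_contra hnin
          exact hcond ⟨ht, hnin⟩
        rw [dif_neg hcond, hB]
        exact Finset.inr_mem_disjSum.mpr hin
    have hinj : Set.InjOn f (T j₀) := by
      intro t₁ ht₁ t₂ ht₂ hft
      rw [Finset.mem_coe] at ht₁ ht₂
      simp only [hf] at hft
      by_cases h₁ : t₁ ∈ T j₀ ∧ a + t₁ ∉ (c (Fin.last k)).coeff.support <;>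
        by_cases h₂ : t₂ ∈ T j₀ ∧ a + t₂ ∉ (c (Fin.last k)).coeff.support
      · rw [dif_pos h₁, dif_pos h₂] at hft
        obtain ⟨hm1, hn1, hv1⟩ := (key t₁ h₁.1 h₁.2).choose_spec
        obtain ⟨hm2, hn2, hv2⟩ := (key t₂ h₂.1 h₂.2).choose_spec
        rw [Sum.inl.injEq, Prod.mk.injEq] at hft
        by_contra htt
        set p₁ := (key t₁ h₁.1 h₁.2).choose
        set p₂ := (key t₂ h₂.1 h₂.2).choose
        have hii : p₁.1 = p₂.1 := hft.1
        refine no_collision T hcard hfull hdisj p₁.1 j₀ t₁ t₂ p₁.2 p₂.2 ht₁ ht₂ hm1 ?_ htt ?_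
          hn1 ?_
        · rw [hii]; exact hm2
        · have := hft.2; omega
        · rw [hii]; exact hn2
      · rw [dif_pos h₁, dif_neg h₂] at hft
        exact absurd hft (by simp)
      · rw [dif_neg h₁, dif_pos h₂] at hft
        exact absurd hft (by simp)
      · rw [dif_neg h₁, dif_neg h₂, Sum.inr.injEq] at hft
        omega
    have hcount : (T j₀).card ≤ B.card := Finset.card_le_card_of_injOn f hmaps hinj
    have hjaA : (j₀, a) ∈ A := (hmemA (j₀, a)).mpr ha
    have hApos : 1 ≤ A.card := Finset.card_pos.mpr ⟨(j₀, a), hjaA⟩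
    have hBcard : B.card = A.card - 1 + wt (c (Fin.last k)) := by
      rw [hB, Finset.card_disjSum, Finset.card_erase_of_mem hjaA]
      rfl
    have htot : (∑ j, wt (c j)) = A.card + wt (c (Fin.last k)) := by
      rw [Fin.sum_univ_castSucc, hcardA]
    rw [htot]
    rw [hcard j₀] at hcount
    omega
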